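/- Let P be a probability measure on a Polish space Ω, X : Ω → E a Borel map to a Polish space E with law μ, (Q_y) the regular conditional distribution of P given X, and let Z : Ω → (0,∞) be measurable with ∫ Z dP = 1. Define dP' = Z dP and let μ' be the law of X under P'. If Z has the form Z(ω) = g(ω) h(X(ω)) for measurable g, h, then for μ'-almost every y, the regular conditional distribution Q'_y of P' given X satisfies dQ'_y = (g / ∫ g dQ_y) dQ_y. -/

import Mathlib

open MeasureTheory ProbabilityTheory
open scoped ENNReal

section Aux

lemma aux_compProd_of_dis {Ω E : Type} [MeasurableSpace Ω] [MeasurableSpace E]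
    (P : Measure Ω) [IsProbabilityMeasure P] (X : Ω → E) (hX : Measurable X)
    (κ : Kernel E Ω) [IsMarkovKernel κ]
    (hdis : ∀ f : Ω → E → ℝ, Measurable (Function.uncurry f) →
      (∃ C, ∀ ω y, |f ω y| ≤ C) →
      ∫ ω, f ω (X ω) ∂P = ∫ y, ∫ ω, f ω y ∂(κ y) ∂(Measure.map X P)) :
    Measure.map (fun ω => (X ω, ω)) P = (Measure.map X P) ⊗ₘ κ := by
  have hT : Measurable (fun ω => (X ω, ω)) := hX.prodMk measurable_id
  haveI : IsProbabilityMeasure (Measure.map X P) := Measure.isProbabilityMeasure_map hX.aemeasurable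
  haveI : IsProbabilityMeasure (Measure.map (fun ω => (X ω, ω)) P) :=
    Measure.isProbabilityMeasure_map hT.aemeasurable
  haveI : IsProbabilityMeasure ((Measure.map X P) ⊗ₘ κ) := by infer_instance
  refine ext_of_generate_finite _ generateFrom_prod.symm isPiSystem_prod ?_ (by simp)
  rintro s ⟨A, hA, B, hB, rfl⟩
  simp only [Set.mem_setOf_eq] at hA hB
  -- compute both sides
  have hLHS : Measure.map (fun ω => (X ω, ω)) P (A ×ˢ B) = P (X ⁻¹' A ∩ B) := by
    rw [Measure.map_apply hT (hA.prod hB)]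
    rfl
  have hRHS : ((Measure.map X P) ⊗ₘ κ) (A ×ˢ B)
      = ∫⁻ y, A.indicator (fun y => κ y B) y ∂(Measure.map X P) := by
    rw [Measure.compProd_apply (hA.prod hB)]
    refine lintegral_congr fun y => ?_
    by_cases hy : y ∈ A
    · simp [hy, Set.indicator_of_mem, Set.mk_preimage_prod_right hy]
    · simp [hy, Set.mk_preimage_prod_right_eq_empty hy]
  rw [hLHS, hRHS]
  -- use the disintegration hypothesis with indicator functions
  have key := hdis (fun ω y => A.indicator (fun _ => (1:ℝ)) y * B.indicator (fun _ => (1:ℝ)) ω)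
    (((measurable_const.indicator hA).comp measurable_snd).mul
      ((measurable_const.indicator hB).comp measurable_fst))
    ⟨1, fun ω y => by
      by_cases h1 : y ∈ A <;> by_cases h2 : ω ∈ B <;>
        simp [Set.indicator_of_mem, Set.indicator_of_notMem, h1, h2]⟩
  have hL : ∫ ω, A.indicator (fun _ => (1:ℝ)) (X ω) * B.indicator (fun _ => (1:ℝ)) ω ∂P
      = (P (X ⁻¹' A ∩ B)).toReal := by
    rw [← measureReal_def, ← integral_indicator_one ((hX hA).inter hB)]
    refine integral_congr_ae (ae_of_all _ fun ω => ?_)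
    by_cases h1 : X ω ∈ A <;> by_cases h2 : ω ∈ B <;>
      simp [Set.indicator_of_mem, Set.indicator_of_notMem, h1, h2, Set.mem_inter_iff]
  have hR : ∫ y, ∫ ω, A.indicator (fun _ => (1:ℝ)) y * B.indicator (fun _ => (1:ℝ)) ω ∂(κ y)
        ∂(Measure.map X P)
      = (∫⁻ y, A.indicator (fun y => κ y B) y ∂(Measure.map X P)).toReal := by
    have hinner : ∀ y, ∫ ω, A.indicator (fun _ => (1:ℝ)) y * B.indicator (fun _ => (1:ℝ)) ω ∂(κ y)
        = (A.indicator (fun y => κ y B) y).toReal := by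
      intro y
      by_cases hy : y ∈ A
      · simp only [Set.indicator_of_mem hy, one_mul]
        rw [← measureReal_def, ← integral_indicator_one hB]
        rfl
      · simp [Set.indicator_of_notMem hy]
    simp_rw [hinner]
    rw [← integral_toReal]
    · exact ((Kernel.measurable_coe κ hB).indicator hA).aemeasurable
    · refine ae_of_all _ fun y => ?_
      by_cases hy : y ∈ A
      · simpa [Set.indicator_of_mem hy] using measure_lt_top (κ y) B
      · simp [Set.indicator_of_notMem hy]
  rw [hL, hR] at key
  have h1 : P (X ⁻¹' A ∩ B) ≠ ∞ := measure_ne_top _ _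
  have h2 : (∫⁻ y, A.indicator (fun y => κ y B) y ∂(Measure.map X P)) ≠ ∞ := by
    refine ne_of_lt (lt_of_le_of_lt ?_ (lt_of_le_of_lt (measure_mono (Set.subset_univ A))
      (by simp [measure_univ] : (Measure.map X P) Set.univ < ∞)))
    calc ∫⁻ y, A.indicator (fun y => κ y B) y ∂(Measure.map X P)
        ≤ ∫⁻ y, A.indicator (fun _ => 1) y ∂(Measure.map X P) := by
          refine lintegral_mono fun y => ?_
          by_cases hy : y ∈ A <;> simp [hy, prob_le_one]
      _ = (Measure.map X P) A := lintegral_indicator_one hA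
  exact (ENNReal.toReal_eq_toReal_iff' h1 h2).mp key

lemma aux_map_withDensity {Ω E : Type} [MeasurableSpace Ω] [MeasurableSpace E]
    (P : Measure Ω) (X : Ω → E) (hX : Measurable X) (W : Ω → ℝ≥0∞) (hW : Measurable W) :
    Measure.map (fun ω => (X ω, ω)) (P.withDensity W)
      = (Measure.map (fun ω => (X ω, ω)) P).withDensity (fun p => W p.2) := by
  have hT : Measurable (fun ω : Ω => (X ω, ω)) := hX.prodMk measurable_id
  ext s hs
  rw [Measure.map_apply hT hs, withDensity_apply _ hs, withDensity_apply _ (hT hs),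
    setLIntegral_map (f := fun p : E × Ω => W p.2) hs (hW.comp measurable_snd) hT]

end Aux

/-- Change of measure for regular conditional distributions (bridges): if
`dP' = Z dP` with `Z ω = g ω * h (X ω)`, then the conditional laws of `P'`
given `X` are obtained from those of `P` by reweighting with `g`. -/
theorem bridge_change_of_measure
    {Ω E : Type} [TopologicalSpace Ω] [PolishSpace Ω]
    [MeasurableSpace Ω] [BorelSpace Ω]
    [TopologicalSpace E] [PolishSpace E] [MeasurableSpace E] [BorelSpace E]
    (P : Measure Ω) [IsProbabilityMeasure P]
    (X : Ω → E) (hX : Measurable X)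
    (Q : E → Measure Ω)
    (hQprob : ∀ y, IsProbabilityMeasure (Q y))
    (hQmeas : ∀ B : Set Ω, MeasurableSet B → Measurable fun y => Q y B)
    (hQdis : ∀ f : Ω → E → ℝ, Measurable (Function.uncurry f) →
      (∃ C, ∀ ω y, |f ω y| ≤ C) →
      ∫ ω, f ω (X ω) ∂P = ∫ y, ∫ ω, f ω y ∂(Q y) ∂(Measure.map X P))
    (Z : Ω → ℝ) (hZmeas : Measurable Z) (hZpos : ∀ ω, 0 < Z ω)
    (hZint : ∫ ω, Z ω ∂P = 1)
    (g : Ω → ℝ) (h : E → ℝ) (hg : Measurable g) (hh : Measurable h)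
    (hfact : ∀ ω, Z ω = g ω * h (X ω))
    (Q' : E → Measure Ω)
    (hQ'prob : ∀ y, IsProbabilityMeasure (Q' y))
    (hQ'meas : ∀ B : Set Ω, MeasurableSet B → Measurable fun y => Q' y B)
    (hQ'dis : ∀ f : Ω → E → ℝ, Measurable (Function.uncurry f) →
      (∃ C, ∀ ω y, |f ω y| ≤ C) →
      ∫ ω, f ω (X ω) ∂(P.withDensity fun ω => ENNReal.ofReal (Z ω)) =
        ∫ y, ∫ ω, f ω y ∂(Q' y)
          ∂(Measure.map X (P.withDensity fun ω => ENNReal.ofReal (Z ω)))) :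
    ∀ᵐ y ∂(Measure.map X (P.withDensity fun ω => ENNReal.ofReal (Z ω))),
      Q' y = (Q y).withDensity
        (fun ω => ENNReal.ofReal (g ω / ∫ ω', g ω' ∂(Q y))) := by
  letI := TopologicalSpace.upgradeIsCompletelyMetrizable E
  haveI : Nonempty Ω := by
    obtain ⟨ω, -⟩ := nonempty_of_measure_ne_zero (μ := P) (s := Set.univ)
      (by simp [measure_univ])
    exact ⟨ω⟩
  set W : Ω → ℝ≥0∞ := fun ω => ENNReal.ofReal (Z ω) with hWdef
  have hWmeas : Measurable W := hZmeas.ennreal_ofReal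
  have hWpos : ∀ ω, 0 < W ω := fun ω => ENNReal.ofReal_pos.mpr (hZpos ω)
  have hWsnd : Measurable fun p : E × Ω => W p.2 := hWmeas.comp measurable_snd
  set P' : Measure Ω := P.withDensity W with hP'def
  have hZi : Integrable Z P := by
    by_contra hc; rw [integral_undef hc] at hZint; norm_num at hZint
  haveI hP'prob : IsProbabilityMeasure P' := by
    constructor
    rw [hP'def, withDensity_apply _ MeasurableSet.univ, Measure.restrict_univ, hWdef,
      ← ofReal_integral_eq_lintegral_ofReal hZi (ae_of_all _ fun ω => (hZpos ω).le), hZint,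
      ENNReal.ofReal_one]
  set μ : Measure E := P.map X with hμdef
  set μ' : Measure E := P'.map X with hμ'def
  haveI : IsProbabilityMeasure μ := Measure.isProbabilityMeasure_map hX.aemeasurable
  haveI : IsProbabilityMeasure μ' := Measure.isProbabilityMeasure_map hX.aemeasurable
  set T : Ω → E × Ω := fun ω => (X ω, ω) with hTdef
  have hT : Measurable T := hX.prodMk measurable_id
  haveI : IsProbabilityMeasure (P'.map T) := Measure.isProbabilityMeasure_map hT.aemeasurable
  set κ : Kernel E Ω := ⟨Q, Measure.measurable_of_measurable_coe _ hQmeas⟩ with hκdef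
  set κ' : Kernel E Ω := ⟨Q', Measure.measurable_of_measurable_coe _ hQ'meas⟩ with hκ'def
  haveI : IsMarkovKernel κ := ⟨hQprob⟩
  haveI : IsMarkovKernel κ' := ⟨hQ'prob⟩
  have hρ : P.map T = μ ⊗ₘ κ := aux_compProd_of_dis P X hX κ hQdis
  have hρ' : P'.map T = μ' ⊗ₘ κ' := aux_compProd_of_dis P' X hX κ' hQ'dis
  -- the normalization function
  set c : E → ℝ≥0∞ := fun y => ∫⁻ ω, W ω ∂(Q y) with hcdef
  have hcmeas : Measurable c := by
    have h1 : Measurable (Function.uncurry fun (_ : E) (ω : Ω) => W ω) :=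
      hWmeas.comp measurable_snd
    exact h1.lintegral_kernel_prod_right (κ := κ)
  have hcpos : ∀ y, c y ≠ 0 := by
    intro y hc0
    haveI := hQprob y
    haveI : (ae (Q y)).NeBot := ae_neBot.mpr (IsProbabilityMeasure.ne_zero _)
    have h0 : ∀ᵐ ω ∂(Q y), W ω = 0 := (lintegral_eq_zero_iff hWmeas).mp hc0
    obtain ⟨ω, hω⟩ := h0.exists
    exact (hWpos ω).ne' hω
  -- μ' = μ.withDensity c
  have hμ'c : μ' = μ.withDensity c := by
    ext A hA
    rw [withDensity_apply _ hA, hμ'def, Measure.map_apply hX hA, hP'def,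
      withDensity_apply _ (hX hA)]
    have h1 : X ⁻¹' A = T ⁻¹' (A ×ˢ Set.univ) := by
      ext ω; simp [hTdef]
    rw [h1, ← setLIntegral_map (f := fun p : E × Ω => W p.2) (hA.prod MeasurableSet.univ)
      hWsnd hT, hρ,
      Measure.setLIntegral_compProd hWsnd hA MeasurableSet.univ]
    refine setLIntegral_congr_fun hA (fun y _ => ?_)
    rw [Measure.restrict_univ]
    rfl
  have hcint : ∫⁻ y, c y ∂μ ≠ ∞ := by
    have : μ' Set.univ = 1 := measure_univ
    rw [hμ'c, withDensity_apply _ MeasurableSet.univ, Measure.restrict_univ] at this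
    simp [this]
  -- the reweighted kernel κ₂
  have hκ₂m : ∀ B : Set Ω, MeasurableSet B →
      Measurable fun y => ((Q y).withDensity fun ω => (c y)⁻¹ * W ω) B := by
    intro B hB
    have heq : ∀ y, ((Q y).withDensity fun ω => (c y)⁻¹ * W ω) B
        = (c y)⁻¹ * ∫⁻ ω, B.indicator W ω ∂(Q y) := by
      intro y
      rw [withDensity_apply _ hB, lintegral_indicator hB,
        ← lintegral_const_mul _ hWmeas]
    simp_rw [heq]
    refine hcmeas.inv.mul ?_
    have h1 : Measurable (Function.uncurry fun (_ : E) (ω : Ω) => B.indicator W ω) :=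
      (hWmeas.indicator hB).comp measurable_snd
    exact h1.lintegral_kernel_prod_right (κ := κ)
  set κ₂ : Kernel E Ω := ⟨fun y => (Q y).withDensity fun ω => (c y)⁻¹ * W ω,
    Measure.measurable_of_measurable_coe _ hκ₂m⟩ with hκ₂def
  have hκ₂univ : ∀ y, κ₂ y Set.univ = (c y)⁻¹ * c y := by
    intro y
    show ((Q y).withDensity fun ω => (c y)⁻¹ * W ω) Set.univ = _
    rw [withDensity_apply _ MeasurableSet.univ, Measure.restrict_univ,
      lintegral_const_mul _ hWmeas]
  haveI : IsFiniteKernel κ₂ := by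
    refine ⟨⟨1, ENNReal.one_lt_top, fun y => ?_⟩⟩
    rw [hκ₂univ y]
    rcases eq_or_ne (c y) ∞ with hc | hc
    · simp [hc]
    · rw [ENNReal.inv_mul_cancel (hcpos y) hc]
  -- second disintegration of P'.map T
  have hρ'2 : P'.map T = μ' ⊗ₘ κ₂ := by
    have h1 : P'.map T = (P.map T).withDensity fun p => W p.2 :=
      aux_map_withDensity P X hX W hWmeas
    rw [h1, hρ, hμ'c]
    ext s hs
    rw [withDensity_apply _ hs, Measure.compProd_apply hs,
      lintegral_withDensity_eq_lintegral_mul _ hcmeas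
        (Kernel.measurable_kernel_prodMk_left hs),
      ← lintegral_indicator hs,
      Measure.lintegral_compProd (hWsnd.indicator hs)]
    refine lintegral_congr_ae ?_
    filter_upwards [ae_lt_top hcmeas hcint] with y hy
    have hsy : MeasurableSet (Prod.mk y ⁻¹' s) := measurable_prodMk_left hs
    have hL : ∫⁻ ω, s.indicator (fun p : E × Ω => W p.2) (y, ω) ∂(κ y)
        = ∫⁻ ω, (Prod.mk y ⁻¹' s).indicator W ω ∂(Q y) := by
      refine lintegral_congr fun ω => ?_
      by_cases hω : (y, ω) ∈ s
      · rw [Set.indicator_of_mem hω,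
          Set.indicator_of_mem (show ω ∈ Prod.mk y ⁻¹' s from hω)]
      · rw [Set.indicator_of_notMem hω,
          Set.indicator_of_notMem (show ω ∉ Prod.mk y ⁻¹' s from hω)]
    have hR : (κ₂ y) (Prod.mk y ⁻¹' s) = (c y)⁻¹ * ∫⁻ ω, (Prod.mk y ⁻¹' s).indicator W ω ∂(Q y) := by
      show ((Q y).withDensity fun ω => (c y)⁻¹ * W ω) (Prod.mk y ⁻¹' s) = _
      rw [withDensity_apply _ hsy, lintegral_indicator hsy, ← lintegral_const_mul _ hWmeas]
    rw [Pi.mul_apply, hL, hR, ← mul_assoc, ENNReal.mul_inv_cancel (hcpos y) hy.ne, one_mul]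
  -- uniqueness of disintegration
  have hfst : (P'.map T).fst = μ' := by
    rw [hTdef, hμ'def]
    exact Measure.fst_map_prodMk measurable_id
  have h1 := ProbabilityTheory.eq_condKernel_of_measure_eq_compProd (ρ := P'.map T) κ'
    (by rw [hfst]; exact hρ')
  have h2 := ProbabilityTheory.eq_condKernel_of_measure_eq_compProd (ρ := P'.map T) κ₂
    (by rw [hfst]; exact hρ'2)
  rw [hfst] at h1 h2
  have hκκ₂ : ∀ᵐ y ∂μ', κ' y = κ₂ y := by
    filter_upwards [h1, h2] with y hy1 hy2
    rw [hy1, hy2]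
  -- fiber concentration
  have hμ'ac : μ' ≪ μ := by
    rw [hμ'c]; exact withDensity_absolutelyContinuous _ _
  have hfiber : ∀ᵐ y ∂μ, ∀ᵐ ω ∂(Q y), X ω = y := by
    set F : Ω → E → ℝ := fun ω y => min (dist (X ω) y) 1 with hFdef
    have hFm : Measurable (Function.uncurry F) :=
      ((hX.comp measurable_fst).dist measurable_snd).min measurable_const
    have hFnonneg : ∀ ω y, 0 ≤ F ω y := fun ω y => le_min dist_nonneg zero_le_one
    have hFle : ∀ ω y, F ω y ≤ 1 := fun ω y => min_le_right _ _
    have key := hQdis F hFm ⟨1, fun ω y => abs_le.mpr ⟨by linarith [hFnonneg ω y], hFle ω y⟩⟩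
    have hL : ∫ ω, F ω (X ω) ∂P = 0 := by
      have : ∀ ω, F ω (X ω) = 0 := fun ω => by simp [hFdef]
      simp [this]
    rw [hL] at key
    -- the function y ↦ ∫ F(·,y) dQ y is measurable
    set G : E → ℝ := fun y => ∫ ω, F ω y ∂(Q y) with hGdef
    have hGsm : StronglyMeasurable G := by
      have h1 : StronglyMeasurable (Function.uncurry fun (y : E) (ω : Ω) => F ω y) :=
        (hFm.comp measurable_swap).stronglyMeasurable
      exact h1.integral_kernel_prod_right (κ := κ)
    have hGnonneg : ∀ y, 0 ≤ G y := fun y =>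
      integral_nonneg fun ω => hFnonneg ω y
    have hGint : Integrable G μ := by
      refine Integrable.mono' (integrable_const 1) hGsm.aestronglyMeasurable
        (ae_of_all _ fun y => ?_)
      rw [Real.norm_eq_abs, abs_of_nonneg (hGnonneg y)]
      haveI := hQprob y
      calc G y ≤ ∫ _ω, (1 : ℝ) ∂(Q y) := by
            refine integral_mono_of_nonneg (ae_of_all _ fun ω => hFnonneg ω y)
              (integrable_const 1) (ae_of_all _ fun ω => hFle ω y)
        _ = 1 := by simp
    have hG0 : ∀ᵐ y ∂μ, G y = 0 := by
      have := (integral_eq_zero_iff_of_nonneg (fun y => hGnonneg y) hGint).mp key.symm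
      filter_upwards [this] with y hy using hy
    filter_upwards [hG0] with y hy
    haveI := hQprob y
    have hFyi : Integrable (fun ω => F ω y) (Q y) := by
      refine Integrable.mono' (integrable_const 1)
        (hFm.comp (measurable_id.prodMk measurable_const)).aestronglyMeasurable
        (ae_of_all _ fun ω => ?_)
      rw [Real.norm_eq_abs, abs_of_nonneg (hFnonneg ω y)]
      exact hFle ω y
    have := (integral_eq_zero_iff_of_nonneg (fun ω => hFnonneg ω y) hFyi).mp hy
    filter_upwards [this] with ω hω
    have hω' : min (dist (X ω) y) 1 = 0 := hω
    have hd : dist (X ω) y = 0 := by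
      rcases le_total (dist (X ω) y) 1 with hle | hle
      · rwa [min_eq_left hle] at hω'
      · rw [min_eq_right hle] at hω'; norm_num at hω'
    exact dist_eq_zero.mp hd
  -- conclude
  have hclt : ∀ᵐ y ∂μ', c y < ∞ :=
    (ae_lt_top hcmeas hcint).filter_mono hμ'ac.ae_le
  have hfiber' : ∀ᵐ y ∂μ', ∀ᵐ ω ∂(Q y), X ω = y := hfiber.filter_mono hμ'ac.ae_le
  filter_upwards [hκκ₂, hclt, hfiber'] with y hy1 hy2 hy3
  haveI := hQprob y
  haveI : (ae (Q y)).NeBot := ae_neBot.mpr (IsProbabilityMeasure.ne_zero _)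
  have hy1' : Q' y = (Q y).withDensity fun ω => (c y)⁻¹ * W ω := hy1
  have hZae : ∀ᵐ ω ∂(Q y), Z ω = g ω * h y := by
    filter_upwards [hy3] with ω hω
    rw [hfact ω, hω]
  have hhy : h y ≠ 0 := by
    obtain ⟨ω, hω⟩ := hZae.exists
    intro h0
    rw [h0, mul_zero] at hω
    exact (hZpos ω).ne' hω
  have hZQi : Integrable Z (Q y) := by
    refine ⟨hZmeas.aestronglyMeasurable, ?_⟩
    rw [hasFiniteIntegral_iff_ofReal (ae_of_all _ fun ω => (hZpos ω).le)]
    exact hy2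
  have hgae : (fun ω => g ω) =ᵐ[Q y] fun ω => Z ω * (h y)⁻¹ := by
    filter_upwards [hZae] with ω hω
    rw [hω]
    field_simp
  have hgQi : Integrable g (Q y) := (hZQi.mul_const _).congr hgae.symm
  have hZQint : ∫ ω, Z ω ∂(Q y) = (c y).toReal := by
    rw [integral_eq_lintegral_of_nonneg_ae (ae_of_all _ fun ω => (hZpos ω).le)
      hZmeas.aestronglyMeasurable]
  have hgint : ∫ ω', g ω' ∂(Q y) = (c y).toReal / h y := by
    rw [integral_congr_ae hgae, integral_mul_const, hZQint, div_eq_mul_inv]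
  have hcR : 0 < (c y).toReal := ENNReal.toReal_pos (hcpos y) hy2.ne
  have hae : (fun ω => ENNReal.ofReal (g ω / ((c y).toReal / h y)))
      =ᵐ[Q y] fun ω => (c y)⁻¹ * W ω := by
    filter_upwards [hZae] with ω hω
    have hdiv : g ω / ((c y).toReal / h y) = Z ω / (c y).toReal := by
      rw [div_div_eq_mul_div, ← hω]
    rw [hdiv, ENNReal.ofReal_div_of_pos hcR, ENNReal.ofReal_toReal hy2.ne,
      div_eq_mul_inv, mul_comm]
  rw [hgint, hy1', withDensity_congr_ae hae]
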